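/- Let V : ℝ → ℝ be C¹ on [0,1] with ‖V'‖_{L^∞([0,1])} =: M > 0. Then for all a, b ∈ [0,1] with a ≤ b, (V(b) − V(a))² ≤ 2M · ∫_a^b (V(z) − V(b)) dz. -/

import Mathlib

open Set intervalIntegral

theorem stmt_4 (V V' : ℝ → ℝ) (M : ℝ) (hM : 0 < M)
    (hderiv : ∀ z ∈ Set.Icc (0:ℝ) 1, HasDerivAt V (V' z) z)
    (hcont : ContinuousOn V' (Set.Icc 0 1))
    (hVdec : ∀ z ∈ Set.Icc (0:ℝ) 1, V' z ≤ 0)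
    (hbound : ∀ z ∈ Set.Icc (0:ℝ) 1, |V' z| ≤ M) :
    ∀ a ∈ Set.Icc (0:ℝ) 1, ∀ b ∈ Set.Icc (0:ℝ) 1, a ≤ b →
      (V b - V a) ^ 2 ≤ 2 * M * ∫ z in a..b, (V z - V b) := by
  intro a ha b hb hab
  have hVcont : ContinuousOn V (Icc 0 1) := fun z hz =>
    (hderiv z hz).continuousAt.continuousWithinAt
  set f : ℝ → ℝ := fun z => V z - V b with hf
  have hfcont : ContinuousOn f (Icc 0 1) := hVcont.sub continuousOn_const
  have hsub : Icc a b ⊆ Icc (0:ℝ) 1 := Icc_subset_Icc ha.1 hb.2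
  have hVanti : AntitoneOn V (Icc 0 1) := by
    apply antitoneOn_of_deriv_nonpos (convex_Icc 0 1) hVcont
    · intro x hx
      exact (hderiv x (interior_subset hx)).differentiableAt.differentiableWithinAt
    · intro x hx
      rw [(hderiv x (interior_subset hx)).deriv]
      exact hVdec x (interior_subset hx)
  set g : ℝ → ℝ := fun x => 2 * M * (∫ z in x..b, f z) - (V b - V x) ^ 2 with hg
  have hint : MeasureTheory.IntegrableOn f (uIcc a b) := by
    rw [uIcc_of_le hab]
    exact (hfcont.mono hsub).integrableOn_compact isCompact_Icc
  have hgcont : ContinuousOn g (Icc a b) := by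
    have h1 := intervalIntegral.continuousOn_primitive_interval_left hint
    rw [uIcc_of_le hab] at h1
    exact (continuousOn_const.mul h1).sub
      ((continuousOn_const.sub (hVcont.mono hsub)).pow 2)
  have hderivg : ∀ x ∈ Ioo a b,
      HasDerivAt g (2 * M * (-f x) - 2 * (V b - V x) ^ 1 * (-(V' x))) x := by
    intro x hx
    have hx01 : x ∈ Ioo (0:ℝ) 1 := ⟨lt_of_le_of_lt ha.1 hx.1, lt_of_lt_of_le hx.2 hb.2⟩
    have hx01' : x ∈ Icc (0:ℝ) 1 := Ioo_subset_Icc_self hx01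
    have hmeas : StronglyMeasurableAtFilter f (nhds x) MeasureTheory.volume :=
      ⟨Ioo 0 1, Ioo_mem_nhds hx01.1 hx01.2,
        (hfcont.mono Ioo_subset_Icc_self).aestronglyMeasurable measurableSet_Ioo⟩
    have hIntx : IntervalIntegrable f MeasureTheory.volume x b := by
      apply ContinuousOn.intervalIntegrable
      apply hfcont.mono
      rw [uIcc_of_le hx.2.le]
      exact Icc_subset_Icc hx01'.1 hb.2
    have hca : ContinuousAt f x :=
      ((hderiv x hx01').continuousAt).sub continuousAt_const
    have hI : HasDerivAt (fun u => ∫ z in u..b, f z) (-f x) x :=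
      intervalIntegral.integral_hasDerivAt_left hIntx hmeas hca
    have hP : HasDerivAt (fun u => (V b - V u) ^ 2)
        (2 * (V b - V x) ^ 1 * (-(V' x))) x := by
      have := ((hderiv x hx01').const_sub (V b)).fun_pow 2
      simpa using this
    exact (hI.const_mul (2 * M)).sub hP
  have key : AntitoneOn g (Icc a b) := by
    apply antitoneOn_of_deriv_nonpos (convex_Icc a b) hgcont
    · intro x hx
      rw [interior_Icc] at hx
      exact (hderivg x hx).differentiableAt.differentiableWithinAt
    · intro x hx
      rw [interior_Icc] at hx
      rw [(hderivg x hx).deriv]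
      have hx01' : x ∈ Icc (0:ℝ) 1 :=
        ⟨ha.1.trans hx.1.le, hx.2.le.trans hb.2⟩
      have h1 : V b ≤ V x := hVanti hx01' hb hx.2.le
      have h2 : 0 ≤ M + V' x := by
        have := abs_le.mp (hbound x hx01')
        linarith [this.1]
      have h3 : 0 ≤ (V x - V b) * (M + V' x) :=
        mul_nonneg (by linarith) h2
      simp only [hf]
      nlinarith
  have h0 : g b ≤ g a := key ⟨le_refl a, hab⟩ ⟨hab, le_refl b⟩ hab
  have hgb : g b = 0 := by
    simp [hg, intervalIntegral.integral_same]
  rw [hgb] at h0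
  have : (V b - V a) ^ 2 ≤ 2 * M * ∫ z in a..b, f z := by
    simp only [hg] at h0
    linarith
  simpa [hf] using this
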